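/- Let 1 < m ≤ √(2 + √3). Then with U₈(φ; m) = m⁴ − 2m²(φ² + 2) + 6φ⁴ − 2φ² + 1, one has U₈(φ; m) ≤ 0 for all φ ∈ [−1, 1]. Consequently, for the generalized φ⁸ potential W₈(φ;m) = (φ²−1)²(φ²−m²)², the transformed potential V satisfies φ·V'(φ) ≤ 0 for all φ ∈ (−1, 1). -/

import Mathlib

open Real Set

theorem phi8_odd_kink_repulsivity (m : ℝ) (hm1 : 1 < m)
    (hm2 : m ≤ Real.sqrt (2 + Real.sqrt 3)) :
    let U : ℝ → ℝ := fun φ => m ^ 4 - 2 * m ^ 2 * (φ ^ 2 + 2)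
        + 6 * φ ^ 4 - 2 * φ ^ 2 + 1
    let W : ℝ → ℝ := fun φ => (φ ^ 2 - 1) ^ 2 * (φ ^ 2 - m ^ 2) ^ 2
    let V : ℝ → ℝ := fun φ => (deriv W φ) ^ 2 / W φ - iteratedDeriv 2 W φ
    (∀ φ ∈ Icc (-1 : ℝ) 1, U φ ≤ 0) ∧
    (∀ φ ∈ Ioo (-1 : ℝ) 1, φ * deriv V φ ≤ 0) := by
  intro U W V
  have hs3 : Real.sqrt 3 ^ 2 = 3 := Real.sq_sqrt (by norm_num)
  have hs3nn : 0 ≤ Real.sqrt 3 := Real.sqrt_nonneg 3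
  have hs3le : Real.sqrt 3 ≤ 2 := by nlinarith
  have hs3ge : 1 ≤ Real.sqrt 3 := by nlinarith
  have hm2' : m ^ 2 ≤ 2 + Real.sqrt 3 := by
    have h0 : (0:ℝ) ≤ 2 + Real.sqrt 3 := by positivity
    nlinarith [Real.sq_sqrt h0, Real.sqrt_nonneg (2 + Real.sqrt 3)]
  have hm1' : 1 < m ^ 2 := by nlinarith
  have key1 : m ^ 4 - 4 * m ^ 2 + 1 ≤ 0 := by
    nlinarith [mul_nonneg (sub_nonneg.2 hm2')
      (show (0:ℝ) ≤ m ^ 2 - (2 - Real.sqrt 3) by nlinarith)]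
  have key2 : m ^ 4 - 6 * m ^ 2 + 5 ≤ 0 := by
    nlinarith [mul_nonneg (show (0:ℝ) ≤ m ^ 2 - 1 by nlinarith)
      (show (0:ℝ) ≤ 5 - m ^ 2 by nlinarith)]
  have hUle : ∀ φ ∈ Icc (-1:ℝ) 1, U φ ≤ 0 := by
    intro φ hφ
    obtain ⟨h1, h2⟩ := hφ
    have ht0 : 0 ≤ φ ^ 2 := sq_nonneg φ
    have ht1 : φ ^ 2 ≤ 1 := by nlinarith
    simp only [U]
    nlinarith [mul_nonneg (sub_nonneg.2 ht1) (neg_nonneg.2 key1),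
      mul_nonneg ht0 (neg_nonneg.2 key2),
      mul_nonneg ht0 (sub_nonneg.2 ht1)]
  refine ⟨hUle, ?_⟩
  -- first derivative of W
  have hW1 : ∀ x : ℝ, HasDerivAt W
      (4 * x * (x ^ 2 - 1) * (x ^ 2 - m ^ 2) * (2 * x ^ 2 - 1 - m ^ 2)) x := by
    intro x
    have h := (((hasDerivAt_pow 2 x).sub_const 1).pow 2).mul
      (((hasDerivAt_pow 2 x).sub_const (m ^ 2)).pow 2)
    refine h.congr_deriv ?_
    simp only [Pi.mul_apply, Pi.pow_apply]
    push_cast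
    ring
  have hdW : deriv W = fun x => 4 * x * (x ^ 2 - 1) * (x ^ 2 - m ^ 2) * (2 * x ^ 2 - 1 - m ^ 2) :=
    funext fun x => (hW1 x).deriv
  -- second derivative of W
  have hW2 : ∀ x : ℝ, HasDerivAt
      (fun x => 4 * x * (x ^ 2 - 1) * (x ^ 2 - m ^ 2) * (2 * x ^ 2 - 1 - m ^ 2))
      (8 * x ^ 2 * (2 * x ^ 2 - 1 - m ^ 2) ^ 2
        + 2 * (x ^ 2 - 1) * (x ^ 2 - m ^ 2) * (12 * x ^ 2 - 2 - 2 * m ^ 2)) x := by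
    intro x
    have h := ((((hasDerivAt_id' (x := x)).const_mul 4).mul
      ((hasDerivAt_pow 2 x).sub_const 1)).mul
      ((hasDerivAt_pow 2 x).sub_const (m ^ 2))).mul
      ((((hasDerivAt_pow 2 x).const_mul 2).sub_const 1).sub_const (m ^ 2))
    refine h.congr_deriv ?_
    simp only [Pi.mul_apply, Pi.pow_apply]
    push_cast
    ring
  have hd2W : ∀ x : ℝ, iteratedDeriv 2 W x =
      8 * x ^ 2 * (2 * x ^ 2 - 1 - m ^ 2) ^ 2
        + 2 * (x ^ 2 - 1) * (x ^ 2 - m ^ 2) * (12 * x ^ 2 - 2 - 2 * m ^ 2) := by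
    intro x
    rw [show (2 : ℕ) = 1 + 1 from rfl, iteratedDeriv_succ, iteratedDeriv_one, hdW]
    exact (hW2 x).deriv
  -- polynomial equal to V away from zeros of W
  set P : ℝ → ℝ := fun x => 8 * x ^ 6 - 4 * (1 + m ^ 2) * x ^ 4
      + (4 * (1 + m ^ 2) ^ 2 - 24 * m ^ 2) * x ^ 2 + 4 * m ^ 2 * (1 + m ^ 2) with hP
  have hVP : ∀ x : ℝ, W x ≠ 0 → V x = P x := by
    intro x hx
    simp only [V, hP]
    rw [hdW, hd2W]
    have hWx : W x = (x ^ 2 - 1) ^ 2 * (x ^ 2 - m ^ 2) ^ 2 := rfl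
    rw [sub_eq_iff_eq_add, div_eq_iff hx, hWx]
    ring
  have hPderiv : ∀ x : ℝ, HasDerivAt P
      (48 * x ^ 5 - 16 * (1 + m ^ 2) * x ^ 3
        + 2 * (4 * (1 + m ^ 2) ^ 2 - 24 * m ^ 2) * x) x := by
    intro x
    have h := ((((hasDerivAt_pow 6 x).const_mul 8).sub
      ((hasDerivAt_pow 4 x).const_mul (4 * (1 + m ^ 2)))).add
      ((hasDerivAt_pow 2 x).const_mul (4 * (1 + m ^ 2) ^ 2 - 24 * m ^ 2))).add_const
      (4 * m ^ 2 * (1 + m ^ 2))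
    refine h.congr_deriv ?_
    push_cast
    ring
  intro φ hφ
  obtain ⟨h1, h2⟩ := hφ
  have hφ2 : φ ^ 2 < 1 := by nlinarith
  -- W ≠ 0 near φ
  have hWcont : Continuous W := by
    simp only [W]; fun_prop
  have hopen : IsOpen {x : ℝ | W x ≠ 0} := isOpen_ne.preimage hWcont
  have hmem : φ ∈ {x : ℝ | W x ≠ 0} := by
    simp only [mem_setOf_eq, W]
    have h1' : φ ^ 2 - 1 ≠ 0 := by nlinarith
    have h2' : φ ^ 2 - m ^ 2 ≠ 0 := by nlinarith
    positivity
  have hev : V =ᶠ[nhds φ] P :=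
    Filter.eventually_of_mem (hopen.mem_nhds hmem) fun x hx => hVP x hx
  have hdV : deriv V φ = 48 * φ ^ 5 - 16 * (1 + m ^ 2) * φ ^ 3
      + 2 * (4 * (1 + m ^ 2) ^ 2 - 24 * m ^ 2) * φ := by
    rw [hev.deriv_eq]
    exact (hPderiv φ).deriv
  rw [hdV]
  have hU : U φ ≤ 0 := hUle φ ⟨le_of_lt h1, le_of_lt h2⟩
  have hUval : m ^ 4 - 2 * m ^ 2 * (φ ^ 2 + 2) + 6 * φ ^ 4 - 2 * φ ^ 2 + 1 ≤ 0 := hU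
  nlinarith [sq_nonneg φ, mul_nonpos_of_nonneg_of_nonpos (sq_nonneg φ) hUval]
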